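/- arXiv:2403.14178 — 11 statements merged into one kernel-verified Lean document; each statement's English description precedes it below -/
import Mathlib

section
/- For all positive real parameters α, β, ξ and all stresses m ∈ ℝ², τ ∈ ℝ^{2×2}, the strains (χ, γ) = S(m, τ) produced by the strain-limiting constitutive map satisfy Q(χ, γ) < 1. -/
noncomputable section

/-- The quadratic form `Q(χ, γ)` on strains. -/
def Qform (α β ξ : ℝ) (χ : Fin 2 → ℝ) (γ : Fin 2 → Fin 2 → ℝ) : ℝ :=
  β ^ 2 * (α ^ 2 * ((χ 0) ^ 2 + (χ 1) ^ 2) +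
    ξ ^ 2 * ((γ 0 0) ^ 2 + (γ 0 1) ^ 2 + (γ 1 0) ^ 2 + (γ 1 1) ^ 2))

/-- The quadratic form `Q*(m, τ)` on stresses. -/
def Qstar (α β ξ : ℝ) (m : Fin 2 → ℝ) (τ : Fin 2 → Fin 2 → ℝ) : ℝ :=
  β ^ 2 * (((m 0) ^ 2 + (m 1) ^ 2) / α ^ 2 +
    ((τ 0 0) ^ 2 + (τ 0 1) ^ 2 + (τ 1 0) ^ 2 + (τ 1 1) ^ 2) / ξ ^ 2)

/-- The strain-limiting constitutive map `S` sending stresses to strains. -/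
def Smap (α β ξ : ℝ) (m : Fin 2 → ℝ) (τ : Fin 2 → Fin 2 → ℝ) :
    (Fin 2 → ℝ) × (Fin 2 → Fin 2 → ℝ) :=
  (fun i => m i / (α ^ 2 * (1 + Real.sqrt (Qstar α β ξ m τ))),
   fun i j => τ i j / (ξ ^ 2 * (1 + Real.sqrt (Qstar α β ξ m τ))))

/-- The inverse constitutive map `T` sending strains to stresses. -/
def Tmap (α β ξ : ℝ) (χ : Fin 2 → ℝ) (γ : Fin 2 → Fin 2 → ℝ) :
    (Fin 2 → ℝ) × (Fin 2 → Fin 2 → ℝ) :=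
  (fun i => α ^ 2 * χ i / (1 - Real.sqrt (Qform α β ξ χ γ)),
   fun i j => ξ ^ 2 * γ i j / (1 - Real.sqrt (Qform α β ξ χ γ)))

/-- The strain-energy density `W(χ, γ)`. -/
def Wdens (α β ξ : ℝ) (χ : Fin 2 → ℝ) (γ : Fin 2 → Fin 2 → ℝ) : ℝ :=
  -(1 / β ^ 2) * (Real.sqrt (Qform α β ξ χ γ) +
    Real.log (1 - Real.sqrt (Qform α β ξ χ γ)))

/-- The complementary strain-energy density `W*(m, τ)`. -/
def Wstar (α β ξ : ℝ) (m : Fin 2 → ℝ) (τ : Fin 2 → Fin 2 → ℝ) : ℝ :=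
  (1 / β ^ 2) * (Real.sqrt (Qstar α β ξ m τ) -
    Real.log (1 + Real.sqrt (Qstar α β ξ m τ)))

/-- the strains produced by the strain-limiting constitutive map
satisfy `Q(χ, γ) < 1`. -/
theorem strain_limiting (α β ξ : ℝ) (hα : 0 < α) (hβ : 0 < β) (hξ : 0 < ξ)
    (m : Fin 2 → ℝ) (τ : Fin 2 → Fin 2 → ℝ) :
    Qform α β ξ (Smap α β ξ m τ).1 (Smap α β ξ m τ).2 < 1 := by
  set q := Qstar α β ξ m τ with hq
  have hq0 : 0 ≤ q := by
    rw [hq]; unfold Qstar; positivity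
  have hs0 : 0 ≤ Real.sqrt q := Real.sqrt_nonneg _
  have hs2 : Real.sqrt q ^ 2 = q := Real.sq_sqrt hq0
  have h1 : (0:ℝ) < 1 + Real.sqrt q := by linarith
  have key : Qform α β ξ (Smap α β ξ m τ).1 (Smap α β ξ m τ).2
      = q / (1 + Real.sqrt q) ^ 2 := by
    simp only [Qform, Smap, ← hq]
    rw [hq]
    unfold Qstar
    have hα' := hα.ne'
    have hξ' := hξ.ne'
    field_simp
  rw [key, div_lt_one (by positivity)]
  nlinarith
end
end

section
/- For all positive real parameters α, β, ξ and all stresses m ∈ ℝ², τ ∈ ℝ^{2×2}, the strains (χ, γ) = S(m, τ) satisfy the identity Q(χ, γ) = Q*(m, τ)/(1 + √(Q*(m, τ)))². -/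
noncomputable section

/-- `Q(S(m, τ)) = Q*(m, τ) / (1 + √(Q*(m, τ)))²`. -/
theorem Q_of_S (α β ξ : ℝ) (hα : 0 < α) (hβ : 0 < β) (hξ : 0 < ξ)
    (m : Fin 2 → ℝ) (τ : Fin 2 → Fin 2 → ℝ) :
    Qform α β ξ (Smap α β ξ m τ).1 (Smap α β ξ m τ).2 =
      Qstar α β ξ m τ / (1 + Real.sqrt (Qstar α β ξ m τ)) ^ 2 := by
  have hQ : 0 ≤ Qstar α β ξ m τ := by
    unfold Qstar
    have h1 : 0 ≤ ((m 0) ^ 2 + (m 1) ^ 2) / α ^ 2 := by positivity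
    have h2 : 0 ≤ ((τ 0 0) ^ 2 + (τ 0 1) ^ 2 + (τ 1 0) ^ 2 + (τ 1 1) ^ 2) / ξ ^ 2 := by
      positivity
    positivity
  have hs : 0 ≤ Real.sqrt (Qstar α β ξ m τ) := Real.sqrt_nonneg _
  have hd : (1 : ℝ) + Real.sqrt (Qstar α β ξ m τ) ≠ 0 := by linarith
  have hα' : (α : ℝ) ^ 2 ≠ 0 := by positivity
  have hξ' : (ξ : ℝ) ^ 2 ≠ 0 := by positivity
  unfold Qform Smap
  simp only
  rw [div_pow, div_pow]
  rw [show Qstar α β ξ m τ = β ^ 2 * (((m 0) ^ 2 + (m 1) ^ 2) / α ^ 2 +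
    ((τ 0 0) ^ 2 + (τ 0 1) ^ 2 + (τ 1 0) ^ 2 + (τ 1 1) ^ 2) / ξ ^ 2) from rfl]
  field_simp
end
end

section
/- For all positive real parameters α, β, ξ and all strains χ ∈ ℝ², γ ∈ ℝ^{2×2} with Q(χ, γ) < 1, applying the strain-limiting constitutive map to the stresses T(χ, γ) recovers the strains: S(T(χ, γ)) = (χ, γ). -/
noncomputable section

lemma Qstar_aux (α β ξ s : ℝ) (hα2 : α ^ 2 ≠ 0) (hξ2 : ξ ^ 2 ≠ 0)
    (h1s : (1:ℝ) - s ≠ 0) (χ : Fin 2 → ℝ) (γ : Fin 2 → Fin 2 → ℝ) :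
    Qstar α β ξ (fun i => α ^ 2 * χ i / (1 - s)) (fun i j => ξ ^ 2 * γ i j / (1 - s))
      = Qform α β ξ χ γ / (1 - s) ^ 2 := by
  simp only [Qstar, Qform]
  field_simp

/-- for strains with `Q(χ, γ) < 1`, `S(T(χ, γ)) = (χ, γ)`. -/
theorem S_of_T (α β ξ : ℝ) (hα : 0 < α) (hβ : 0 < β) (hξ : 0 < ξ)
    (χ : Fin 2 → ℝ) (γ : Fin 2 → Fin 2 → ℝ) (hQ : Qform α β ξ χ γ < 1) :
    Smap α β ξ (Tmap α β ξ χ γ).1 (Tmap α β ξ χ γ).2 = (χ, γ) := by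
  have hQ0 : 0 ≤ Qform α β ξ χ γ := by unfold Qform; positivity
  set s := Real.sqrt (Qform α β ξ χ γ) with hs
  have hs0 : 0 ≤ s := Real.sqrt_nonneg _
  have hssq : s ^ 2 = Qform α β ξ χ γ := Real.sq_sqrt hQ0
  have hs1 : s < 1 := by nlinarith
  have h1s : (0:ℝ) < 1 - s := by linarith
  have hα2 : (α:ℝ) ^ 2 ≠ 0 := by positivity
  have hξ2 : (ξ:ℝ) ^ 2 ≠ 0 := by positivity
  have h1s' : (1:ℝ) - s ≠ 0 := h1s.ne'
  have hQstar : Qstar α β ξ (Tmap α β ξ χ γ).1 (Tmap α β ξ χ γ).2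
      = Qform α β ξ χ γ / (1 - s) ^ 2 := by
    simp only [Tmap, ← hs]
    exact Qstar_aux α β ξ s hα2 hξ2 h1s' χ γ
  have hsqrt : Real.sqrt (Qstar α β ξ (Tmap α β ξ χ γ).1 (Tmap α β ξ χ γ).2)
      = s / (1 - s) := by
    rw [hQstar, Real.sqrt_div hQ0, Real.sqrt_sq h1s.le, ← hs]
  have hden : 1 + s / (1 - s) = 1 / (1 - s) := by field_simp; ring
  ext1
  · funext i
    show (Tmap α β ξ χ γ).1 i / (α ^ 2 * (1 + Real.sqrt (Qstar α β ξ (Tmap α β ξ χ γ).1 (Tmap α β ξ χ γ).2))) = χ i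
    rw [hsqrt, hden]
    simp only [Tmap, ← hs]
    field_simp
  · funext i j
    show (Tmap α β ξ χ γ).2 i j / (ξ ^ 2 * (1 + Real.sqrt (Qstar α β ξ (Tmap α β ξ χ γ).1 (Tmap α β ξ χ γ).2))) = γ i j
    rw [hsqrt, hden]
    simp only [Tmap, ← hs]
    field_simp
end
end

section
/- For all positive real parameters α, β, ξ and all stresses m ∈ ℝ², τ ∈ ℝ^{2×2}, the strains (χ, γ) = S(m, τ) satisfy Q(χ, γ) < 1 (so T(χ, γ) is defined) and T(S(m, τ)) = (m, τ). -/
noncomputable section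

/-- the strains `(χ, γ) = S(m, τ)` satisfy `Q(χ, γ) < 1`
(so `T(χ, γ)` is defined) and `T(S(m, τ)) = (m, τ)`. -/
theorem T_of_S (α β ξ : ℝ) (hα : 0 < α) (hβ : 0 < β) (hξ : 0 < ξ)
    (m : Fin 2 → ℝ) (τ : Fin 2 → Fin 2 → ℝ) :
    Qform α β ξ (Smap α β ξ m τ).1 (Smap α β ξ m τ).2 < 1 ∧
      Tmap α β ξ (Smap α β ξ m τ).1 (Smap α β ξ m τ).2 = (m, τ) := by
  have hq : 0 ≤ Qstar α β ξ m τ := by unfold Qstar; positivity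
  set q := Qstar α β ξ m τ with hqdef
  set s := Real.sqrt q with hsdef
  have hs : 0 ≤ s := Real.sqrt_nonneg q
  have hsq : s ^ 2 = q := Real.sq_sqrt hq
  have h1s : (0:ℝ) < 1 + s := by linarith
  have hQ : Qform α β ξ (Smap α β ξ m τ).1 (Smap α β ξ m τ).2 = (s / (1 + s)) ^ 2 := by
    have hqd : q = β ^ 2 * (((m 0)^2 + (m 1)^2)/α^2 +
        ((τ 0 0)^2+(τ 0 1)^2+(τ 1 0)^2+(τ 1 1)^2)/ξ^2) := rfl
    simp only [Qform, Smap]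
    have hrhs : (s / (1 + s)) ^ 2 = q / (1 + s) ^ 2 := by rw [div_pow, hsq]
    rw [← hqdef, ← hsdef, hrhs, hqd]
    field_simp
  have hlt : s / (1 + s) < 1 := by
    rw [div_lt_one h1s]; linarith
  have hsqrtQ : Real.sqrt (Qform α β ξ (Smap α β ξ m τ).1 (Smap α β ξ m τ).2) = s / (1 + s) := by
    rw [hQ, Real.sqrt_sq (by positivity)]
  refine ⟨by rw [hQ]; nlinarith [div_nonneg hs h1s.le], ?_⟩
  have hden : 1 - s / (1 + s) = 1 / (1 + s) := by field_simp; ring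
  unfold Tmap
  rw [hsqrtQ, hden]
  simp only [Smap]
  rw [← hqdef, ← hsdef]
  refine Prod.ext ?_ ?_ <;> simp only
  · funext i; field_simp
  · funext i j; field_simp
end
end

section
/- For all positive real parameters α, β, ξ and all stresses m ∈ ℝ², τ ∈ ℝ^{2×2}, the strains (χ, γ) = S(m, τ) are componentwise bounded independently of the magnitude of the stresses: |χᵢ| < 1/(α·β) for i = 1, 2 and |γᵢⱼ| < 1/(ξ·β) for i, j = 1, 2. -/
noncomputable section

/-- the strains `S(m, τ)` are componentwise bounded independently
of the magnitude of the stresses: `|χᵢ| < 1/(α·β)` and `|γᵢⱼ| < 1/(ξ·β)`. -/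
theorem strain_componentwise_bounded (α β ξ : ℝ) (hα : 0 < α) (hβ : 0 < β) (hξ : 0 < ξ)
    (m : Fin 2 → ℝ) (τ : Fin 2 → Fin 2 → ℝ) :
    (∀ i : Fin 2, |(Smap α β ξ m τ).1 i| < 1 / (α * β)) ∧
      (∀ i j : Fin 2, |(Smap α β ξ m τ).2 i j| < 1 / (ξ * β)) := by
  set s := Real.sqrt (Qstar α β ξ m τ) with hs
  have hs0 : 0 ≤ s := Real.sqrt_nonneg _
  have hd : 0 < 1 + s := by linarith
  have hQm : α ^ 2 * Qstar α β ξ m τ =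
      β ^ 2 * ((m 0) ^ 2 + (m 1) ^ 2) +
        α ^ 2 * β ^ 2 * (((τ 0 0) ^ 2 + (τ 0 1) ^ 2 + (τ 1 0) ^ 2 + (τ 1 1) ^ 2) / ξ ^ 2) := by
    rw [Qstar]; field_simp
  have hQτ : ξ ^ 2 * Qstar α β ξ m τ =
      β ^ 2 * ((τ 0 0) ^ 2 + (τ 0 1) ^ 2 + (τ 1 0) ^ 2 + (τ 1 1) ^ 2) +
        ξ ^ 2 * β ^ 2 * (((m 0) ^ 2 + (m 1) ^ 2) / α ^ 2) := by
    rw [Qstar]; field_simp; ring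
  have hkey : ∀ i : Fin 2, β * |m i| ≤ α * s := by
    intro i
    have h1 : (β * |m i|) ^ 2 ≤ α ^ 2 * Qstar α β ξ m τ := by
      rw [mul_pow, sq_abs, hQm]
      have hT : 0 ≤ α ^ 2 * β ^ 2 *
          (((τ 0 0) ^ 2 + (τ 0 1) ^ 2 + (τ 1 0) ^ 2 + (τ 1 1) ^ 2) / ξ ^ 2) := by positivity
      have hmi : (m i) ^ 2 ≤ (m 0) ^ 2 + (m 1) ^ 2 := by
        fin_cases i <;> simp only [Fin.mk_zero, Fin.mk_one, Fin.isValue] <;>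
          linarith [sq_nonneg (m 0), sq_nonneg (m 1)]
      linarith [mul_le_mul_of_nonneg_left hmi (sq_nonneg β)]
    calc β * |m i| = Real.sqrt ((β * |m i|) ^ 2) := (Real.sqrt_sq (by positivity)).symm
      _ ≤ Real.sqrt (α ^ 2 * Qstar α β ξ m τ) := Real.sqrt_le_sqrt h1
      _ = α * s := by
          rw [hs, Real.sqrt_mul (by positivity), Real.sqrt_sq hα.le]
  have hkeyτ : ∀ i j : Fin 2, β * |τ i j| ≤ ξ * s := by
    intro i j
    have h1 : (β * |τ i j|) ^ 2 ≤ ξ ^ 2 * Qstar α β ξ m τ := by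
      rw [mul_pow, sq_abs, hQτ]
      have hT : 0 ≤ ξ ^ 2 * β ^ 2 * (((m 0) ^ 2 + (m 1) ^ 2) / α ^ 2) := by positivity
      have hti : (τ i j) ^ 2 ≤ (τ 0 0) ^ 2 + (τ 0 1) ^ 2 + (τ 1 0) ^ 2 + (τ 1 1) ^ 2 := by
        fin_cases i <;> fin_cases j <;> simp only [Fin.mk_zero, Fin.mk_one, Fin.isValue] <;>
          linarith [sq_nonneg (τ 0 0), sq_nonneg (τ 0 1), sq_nonneg (τ 1 0), sq_nonneg (τ 1 1)]
      linarith [mul_le_mul_of_nonneg_left hti (sq_nonneg β)]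
    calc β * |τ i j| = Real.sqrt ((β * |τ i j|) ^ 2) := (Real.sqrt_sq (by positivity)).symm
      _ ≤ Real.sqrt (ξ ^ 2 * Qstar α β ξ m τ) := Real.sqrt_le_sqrt h1
      _ = ξ * s := by
          rw [hs, Real.sqrt_mul (by positivity), Real.sqrt_sq hξ.le]
  constructor
  · intro i
    have h := hkey i
    simp only [Smap]
    rw [abs_div, abs_of_pos (by positivity : (0:ℝ) < α ^ 2 * (1 + s))]
    rw [div_lt_div_iff₀ (by positivity) (by positivity)]
    have h2 : α * (β * |m i|) ≤ α * (α * s) := mul_le_mul_of_nonneg_left h hα.le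
    nlinarith [sq_nonneg α, mul_pos hα hα]
  · intro i j
    have h := hkeyτ i j
    simp only [Smap]
    rw [abs_div, abs_of_pos (by positivity : (0:ℝ) < ξ ^ 2 * (1 + s))]
    rw [div_lt_div_iff₀ (by positivity) (by positivity)]
    have h2 : ξ * (β * |τ i j|) ≤ ξ * (ξ * s) := mul_le_mul_of_nonneg_left h hξ.le
    nlinarith [sq_nonneg ξ, mul_pos hξ hξ]
end
end

section
/- For all positive real parameters α, β, ξ and all stresses m ∈ ℝ², τ ∈ ℝ^{2×2} with (m, τ) ≠ (0, 0), the strains approach their limiting level asymptotically along rays of increasing stress: Q(S(t·m, t·τ)) tends to 1 as the real number t tends to +∞. -/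
noncomputable section

/-- for nonzero stresses, the strains approach their limiting level
asymptotically along rays of increasing stress:
`Q(S(t·m, t·τ)) → 1` as `t → +∞`. -/
theorem Q_of_S_tendsto_one (α β ξ : ℝ) (hα : 0 < α) (hβ : 0 < β) (hξ : 0 < ξ)
    (m : Fin 2 → ℝ) (τ : Fin 2 → Fin 2 → ℝ) (hmτ : (m, τ) ≠ (0, 0)) :
    Filter.Tendsto
      (fun t : ℝ =>
        Qform α β ξ (Smap α β ξ (fun i => t * m i) (fun i j => t * τ i j)).1
          (Smap α β ξ (fun i => t * m i) (fun i j => t * τ i j)).2)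
      Filter.atTop (nhds 1) := by
  have hQpos : 0 < Qstar α β ξ m τ := by
    have hcase : m ≠ 0 ∨ τ ≠ 0 := by
      by_contra h
      push_neg at h
      exact hmτ (by rw [Prod.mk.injEq]; exact ⟨h.1, h.2⟩)
    have hsum1 : (0:ℝ) ≤ (m 0) ^ 2 + (m 1) ^ 2 := by positivity
    have hsum2 : (0:ℝ) ≤ (τ 0 0) ^ 2 + (τ 0 1) ^ 2 + (τ 1 0) ^ 2 + (τ 1 1) ^ 2 := by
      positivity
    rcases hcase with hm | hτ
    · have h1 : (0:ℝ) < (m 0) ^ 2 + (m 1) ^ 2 := by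
        by_contra h
        push_neg at h
        apply hm
        funext k
        fin_cases k
        · show m 0 = 0
          exact (pow_eq_zero_iff two_ne_zero).mp
            (le_antisymm (by nlinarith [sq_nonneg (m 1)]) (sq_nonneg _))
        · show m 1 = 0
          exact (pow_eq_zero_iff two_ne_zero).mp
            (le_antisymm (by nlinarith [sq_nonneg (m 0)]) (sq_nonneg _))
      exact mul_pos (pow_pos hβ 2)
        (add_pos_of_pos_of_nonneg (div_pos h1 (pow_pos hα 2))
          (div_nonneg hsum2 (by positivity)))
    · have h2 : (0:ℝ) < (τ 0 0) ^ 2 + (τ 0 1) ^ 2 + (τ 1 0) ^ 2 + (τ 1 1) ^ 2 := by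
        by_contra h
        push_neg at h
        apply hτ
        funext k l
        fin_cases k <;> fin_cases l
        · show τ 0 0 = 0
          exact (pow_eq_zero_iff two_ne_zero).mp (le_antisymm
            (by nlinarith [sq_nonneg (τ 0 1), sq_nonneg (τ 1 0), sq_nonneg (τ 1 1)])
            (sq_nonneg _))
        · show τ 0 1 = 0
          exact (pow_eq_zero_iff two_ne_zero).mp (le_antisymm
            (by nlinarith [sq_nonneg (τ 0 0), sq_nonneg (τ 1 0), sq_nonneg (τ 1 1)])
            (sq_nonneg _))
        · show τ 1 0 = 0
          exact (pow_eq_zero_iff two_ne_zero).mp (le_antisymm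
            (by nlinarith [sq_nonneg (τ 0 0), sq_nonneg (τ 0 1), sq_nonneg (τ 1 1)])
            (sq_nonneg _))
        · show τ 1 1 = 0
          exact (pow_eq_zero_iff two_ne_zero).mp (le_antisymm
            (by nlinarith [sq_nonneg (τ 0 0), sq_nonneg (τ 0 1), sq_nonneg (τ 1 0)])
            (sq_nonneg _))
      exact mul_pos (pow_pos hβ 2)
        (add_pos_of_nonneg_of_pos (div_nonneg hsum1 (by positivity))
          (div_pos h2 (pow_pos hξ 2)))
  obtain ⟨q, hqdef⟩ : ∃ q, q = Real.sqrt (Qstar α β ξ m τ) := ⟨_, rfl⟩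
  have hqpos : 0 < q := hqdef ▸ Real.sqrt_pos.mpr hQpos
  have key : ∀ t : ℝ, 0 < t →
      Qform α β ξ (Smap α β ξ (fun i => t * m i) (fun i j => t * τ i j)).1
        (Smap α β ξ (fun i => t * m i) (fun i j => t * τ i j)).2
      = (t * q / (1 + t * q)) ^ 2 := by
    intro t ht
    have h1 : Qstar α β ξ (fun i => t * m i) (fun i j => t * τ i j)
        = t ^ 2 * Qstar α β ξ m τ := by
      simp only [Qstar]
      ring
    have h2 : Real.sqrt (Qstar α β ξ (fun i => t * m i) (fun i j => t * τ i j)) = t * q := by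
      rw [h1, hqdef, Real.sqrt_mul (sq_nonneg t), Real.sqrt_sq ht.le]
    have hd : (0:ℝ) < 1 + t * q := by positivity
    simp only [Smap, Qform, h2]
    rw [show (t * q / (1 + t * q)) ^ 2 = t ^ 2 * q ^ 2 / (1 + t * q) ^ 2 by
        rw [div_pow, mul_pow],
      show q ^ 2 = Qstar α β ξ m τ by rw [hqdef]; exact Real.sq_sqrt hQpos.le, Qstar]
    have hne : (1 + t * q) ≠ 0 := ne_of_gt hd
    field_simp
  have h3 : Filter.Tendsto (fun t : ℝ => 1 + t * q) Filter.atTop Filter.atTop :=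
    Filter.tendsto_atTop_add_const_left _ 1 (Filter.tendsto_id.atTop_mul_const hqpos)
  have hratio : Filter.Tendsto (fun t : ℝ => t * q / (1 + t * q)) Filter.atTop (nhds 1) := by
    have h4 : Filter.Tendsto (fun t : ℝ => 1 - (1 + t * q)⁻¹) Filter.atTop (nhds 1) := by
      have h5 : Filter.Tendsto (fun t : ℝ => 1 - (1 + t * q)⁻¹) Filter.atTop
          (nhds (1 - 0)) := tendsto_const_nhds.sub h3.inv_tendsto_atTop
      simpa using h5
    refine h4.congr' ?_
    filter_upwards [Filter.eventually_gt_atTop 0] with t ht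
    have hd : (0:ℝ) < 1 + t * q := by positivity
    field_simp
    ring
  have hfinal : Filter.Tendsto (fun t : ℝ => (t * q / (1 + t * q)) ^ 2)
      Filter.atTop (nhds 1) := by
    have := hratio.pow 2
    simpa using this
  refine hfinal.congr' ?_
  filter_upwards [Filter.eventually_gt_atTop 0] with t ht
  exact (key t ht).symm
end
end

section
/- For all positive real parameters α, β, ξ and all strains χ ∈ ℝ², γ ∈ ℝ^{2×2} with Q(χ, γ) < 1, the strain-energy density W is Fréchet differentiable at (χ, γ) (as a function on ℝ² × ℝ^{2×2}), and its derivative is the linear map (a, b) ↦ m₁·a₁ + m₂·a₂ + τ₁₁·b₁₁ + τ₁₂·b₁₂ + τ₂₁·b₂₁ + τ₂₂·b₂₂, where (m, τ) = T(χ, γ); that is, the stresses are the gradients of W (hyperelasticity). -/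
set_option maxHeartbeats 1000000

noncomputable section

/-- `Q` is nonnegative. -/
lemma Qform_nonneg (α β ξ : ℝ) (χ : Fin 2 → ℝ) (γ : Fin 2 → Fin 2 → ℝ) :
    0 ≤ Qform α β ξ χ γ := by
  unfold Qform; positivity

/-- Bound `|s + log(1-s)| ≤ s^2/(1-s)` for `0 ≤ s < 1`. -/
lemma key_log_bound {s : ℝ} (h0 : 0 ≤ s) (h1 : s < 1) :
    |s + Real.log (1 - s)| ≤ s ^ 2 / (1 - s) := by
  have h := Real.abs_log_sub_add_sum_range_le (x := s) (by rwa [abs_of_nonneg h0]) 1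
  simpa [abs_of_nonneg h0] using h

/-- The quadratic bound `Qform ≤ K ‖p‖²`. -/
lemma Qform_le (α β ξ : ℝ) (p : (Fin 2 → ℝ) × (Fin 2 → Fin 2 → ℝ)) :
    Qform α β ξ p.1 p.2 ≤ β ^ 2 * (2 * α ^ 2 + 4 * ξ ^ 2) * ‖p‖ ^ 2 := by
  have h1 : ∀ i : Fin 2, (p.1 i) ^ 2 ≤ ‖p‖ ^ 2 := by
    intro i
    have : |p.1 i| ≤ ‖p‖ := le_trans (norm_le_pi_norm p.1 i) (norm_fst_le p)
    calc (p.1 i) ^ 2 = |p.1 i| ^ 2 := (sq_abs _).symm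
      _ ≤ ‖p‖ ^ 2 := by gcongr
  have h2 : ∀ i j : Fin 2, (p.2 i j) ^ 2 ≤ ‖p‖ ^ 2 := by
    intro i j
    have : |p.2 i j| ≤ ‖p‖ :=
      le_trans (le_trans (norm_le_pi_norm (p.2 i) j) (norm_le_pi_norm p.2 i)) (norm_snd_le p)
    calc (p.2 i j) ^ 2 = |p.2 i j| ^ 2 := (sq_abs _).symm
      _ ≤ ‖p‖ ^ 2 := by gcongr
  have hα2 : (0:ℝ) ≤ α ^ 2 := sq_nonneg α
  have hξ2 : (0:ℝ) ≤ ξ ^ 2 := sq_nonneg ξ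
  have hβ2 : (0:ℝ) ≤ β ^ 2 := sq_nonneg β
  unfold Qform
  nlinarith [h1 0, h1 1, h2 0 0, h2 0 1, h2 1 0, h2 1 1,
    mul_le_mul_of_nonneg_left (h1 0) hα2, mul_le_mul_of_nonneg_left (h1 1) hα2,
    mul_le_mul_of_nonneg_left (h2 0 0) hξ2, mul_le_mul_of_nonneg_left (h2 0 1) hξ2,
    mul_le_mul_of_nonneg_left (h2 1 0) hξ2, mul_le_mul_of_nonneg_left (h2 1 1) hξ2]

/-- hyperelasticity. For strains with `Q(χ, γ) < 1`, the
strain-energy density `W` is Fréchet differentiable at `(χ, γ)`, and its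
derivative is the linear map `(a, b) ↦ Σᵢ mᵢ·aᵢ + Σᵢⱼ τᵢⱼ·bᵢⱼ` where
`(m, τ) = T(χ, γ)`. -/
theorem hasFDerivAt_Wdens (α β ξ : ℝ) (hα : 0 < α) (hβ : 0 < β) (hξ : 0 < ξ)
    (χ : Fin 2 → ℝ) (γ : Fin 2 → Fin 2 → ℝ) (hQ : Qform α β ξ χ γ < 1) :
    ∃ L : ((Fin 2 → ℝ) × (Fin 2 → Fin 2 → ℝ)) →L[ℝ] ℝ,
      HasFDerivAt
        (fun p : (Fin 2 → ℝ) × (Fin 2 → Fin 2 → ℝ) => Wdens α β ξ p.1 p.2) L (χ, γ) ∧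
      ∀ (a : Fin 2 → ℝ) (b : Fin 2 → Fin 2 → ℝ),
        L (a, b) =
          (Tmap α β ξ χ γ).1 0 * a 0 + (Tmap α β ξ χ γ).1 1 * a 1 +
          (Tmap α β ξ χ γ).2 0 0 * b 0 0 + (Tmap α β ξ χ γ).2 0 1 * b 0 1 +
          (Tmap α β ξ χ γ).2 1 0 * b 1 0 + (Tmap α β ξ χ γ).2 1 1 * b 1 1 := by
  by_cases h0 : Qform α β ξ χ γ = 0
  · -- the degenerate case: all strains vanish
    have hβ2 : (0:ℝ) < β ^ 2 := pow_pos hβ 2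
    have hα2 : (0:ℝ) < α ^ 2 := pow_pos hα 2
    have hξ2 : (0:ℝ) < ξ ^ 2 := pow_pos hξ 2
    have hsum : α ^ 2 * ((χ 0) ^ 2 + (χ 1) ^ 2) +
        ξ ^ 2 * ((γ 0 0) ^ 2 + (γ 0 1) ^ 2 + (γ 1 0) ^ 2 + (γ 1 1) ^ 2) = 0 := by
      have := h0
      unfold Qform at this
      have hne : β ^ 2 ≠ 0 := hβ2.ne'
      exact (mul_eq_zero.mp this).resolve_left hne
    have key : ∀ x : ℝ, x ^ 2 ≤ 0 → x = 0 := by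
      intro x h
      have hx : x ^ 2 = 0 := le_antisymm h (sq_nonneg x)
      exact pow_eq_zero_iff two_ne_zero |>.mp hx
    have hzero : ∀ x : ℝ, x ∈ ({χ 0, χ 1, γ 0 0, γ 0 1, γ 1 0, γ 1 1} : Set ℝ) → x = 0 := by
      intro x hx
      apply key
      rcases hx with h | h | h | h | h | h <;> subst h <;>
        nlinarith [sq_nonneg (χ 0), sq_nonneg (χ 1), sq_nonneg (γ 0 0), sq_nonneg (γ 0 1),
          sq_nonneg (γ 1 0), sq_nonneg (γ 1 1)]
    have hχ : χ = 0 := by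
      funext i
      fin_cases i
      · exact hzero _ (by simp)
      · exact hzero _ (by simp)
    have hγ : γ = 0 := by
      funext i j
      fin_cases i <;> fin_cases j
      · exact hzero _ (by simp)
      · exact hzero _ (by simp)
      · exact hzero _ (by simp)
      · exact hzero _ (by simp)
    subst hχ hγ
    refine ⟨0, ?_, ?_⟩
    · -- HasFDerivAt with derivative 0 at (0,0)
      have hQ0 : Qform α β ξ (0 : Fin 2 → ℝ) (0 : Fin 2 → Fin 2 → ℝ) = 0 := by
        simp [Qform]
      rw [hasFDerivAt_iff_isLittleO_nhds_zero]
      have hW0 : Wdens α β ξ (0 : Fin 2 → ℝ) (0 : Fin 2 → Fin 2 → ℝ) = 0 := by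
        simp [Wdens, hQ0]
      simp only [Prod.fst_add, Prod.snd_add, Prod.fst_zero, Prod.snd_zero, zero_add, hW0,
        ContinuousLinearMap.zero_apply, sub_zero]
      -- goal: (fun h => Wdens α β ξ h.1 h.2) =o[𝓝 0] fun h => h
      set K : ℝ := β ^ 2 * (2 * α ^ 2 + 4 * ξ ^ 2) with hK
      have hKpos : 0 < K := by positivity
      have hbigO : (fun p : (Fin 2 → ℝ) × (Fin 2 → Fin 2 → ℝ) => Wdens α β ξ p.1 p.2)
          =O[nhds 0] fun p => ‖p‖ ^ 2 := by
        rw [Asymptotics.isBigO_iff]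
        refine ⟨2 * K / β ^ 2, ?_⟩
        have hδ : (0:ℝ) < Real.sqrt (1 / (4 * K)) := by positivity
        filter_upwards [Metric.ball_mem_nhds (0 : (Fin 2 → ℝ) × (Fin 2 → Fin 2 → ℝ)) hδ]
          with p hp
        rw [mem_ball_zero_iff] at hp
        set q := Qform α β ξ p.1 p.2 with hq
        have hq0 : 0 ≤ q := Qform_nonneg _ _ _ _ _
        have hqK : q ≤ K * ‖p‖ ^ 2 := Qform_le α β ξ p
        have hps : ‖p‖ ^ 2 < 1 / (4 * K) := by
          have h1 : ‖p‖ ^ 2 < Real.sqrt (1 / (4 * K)) ^ 2 := by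
            gcongr
          rwa [Real.sq_sqrt (by positivity)] at h1
        have hq4 : q ≤ 1 / 4 := by
          calc q ≤ K * ‖p‖ ^ 2 := hqK
            _ ≤ K * (1 / (4 * K)) := by gcongr
            _ = 1 / 4 := by field_simp
        set s := Real.sqrt q with hs
        have hs0 : 0 ≤ s := Real.sqrt_nonneg q
        have hs2 : s ≤ 1 / 2 := by
          rw [hs, show (1:ℝ)/2 = Real.sqrt (1/4) by
            rw [show (1:ℝ)/4 = (1/2)^2 by norm_num, Real.sqrt_sq (by norm_num)]]
          exact Real.sqrt_le_sqrt hq4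
        have hs1 : s < 1 := lt_of_le_of_lt hs2 (by norm_num)
        have hlog := key_log_bound hs0 hs1
        have hsq : s ^ 2 = q := Real.sq_sqrt hq0
        have hW : |Wdens α β ξ p.1 p.2| ≤ (1 / β ^ 2) * (q / (1 - s)) := by
          have : Wdens α β ξ p.1 p.2 = -(1 / β ^ 2) * (s + Real.log (1 - s)) := by
            rw [Wdens, ← hq, ← hs]
          rw [this, abs_mul, abs_neg, abs_of_pos (by positivity : (0:ℝ) < 1 / β ^ 2)]
          rw [← hsq]
          exact mul_le_mul_of_nonneg_left hlog (by positivity)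
        have hfin : (1 / β ^ 2) * (q / (1 - s)) ≤ 2 * K / β ^ 2 * ‖p‖ ^ 2 := by
          have h12 : (1:ℝ)/2 ≤ 1 - s := by linarith
          have : q / (1 - s) ≤ 2 * q := by
            have h' : q / (1 - s) ≤ q / (1 / 2) :=
              div_le_div_of_nonneg_left hq0 (by norm_num) h12
            calc q / (1 - s) ≤ q / (1 / 2) := h'
              _ = 2 * q := by ring
          calc (1 / β ^ 2) * (q / (1 - s)) ≤ (1 / β ^ 2) * (2 * q) :=
                mul_le_mul_of_nonneg_left this (by positivity)
            _ ≤ (1 / β ^ 2) * (2 * (K * ‖p‖ ^ 2)) := by gcongr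
            _ = 2 * K / β ^ 2 * ‖p‖ ^ 2 := by ring
        calc ‖Wdens α β ξ p.1 p.2‖ = |Wdens α β ξ p.1 p.2| := rfl
          _ ≤ (1 / β ^ 2) * (q / (1 - s)) := hW
          _ ≤ 2 * K / β ^ 2 * ‖p‖ ^ 2 := hfin
          _ ≤ 2 * K / β ^ 2 * ‖(fun p : (Fin 2 → ℝ) × (Fin 2 → Fin 2 → ℝ) => ‖p‖ ^ 2) p‖ := by
              simp [abs_of_nonneg (sq_nonneg ‖p‖)]
      have hlittle : (fun p : (Fin 2 → ℝ) × (Fin 2 → Fin 2 → ℝ) => ‖p‖ ^ 2)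
          =o[nhds 0] fun p => p := by
        have h1 : (fun p : (Fin 2 → ℝ) × (Fin 2 → Fin 2 → ℝ) => ‖p‖) =o[nhds 0]
            (fun _ => (1:ℝ)) := by
          rw [Asymptotics.isLittleO_one_iff]
          exact tendsto_norm_zero
        have h2 : (fun p : (Fin 2 → ℝ) × (Fin 2 → Fin 2 → ℝ) => ‖p‖) =O[nhds 0]
            fun p => ‖p‖ := Asymptotics.isBigO_refl _ _
        have h3 := h1.mul_isBigO h2
        simp only [one_mul] at h3
        have heq2 : (fun p : (Fin 2 → ℝ) × (Fin 2 → Fin 2 → ℝ) => ‖p‖ ^ 2)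
            = fun p => ‖p‖ * ‖p‖ := by funext p; ring
        rw [heq2]
        exact Asymptotics.isLittleO_norm_right.mp h3
      exact hbigO.trans_isLittleO hlittle
    · intro a b
      simp [Tmap, Qform]
  · -- the main case: Q > 0
    have hq0 : 0 < Qform α β ξ χ γ := lt_of_le_of_ne (Qform_nonneg _ _ _ _ _) (Ne.symm h0)
    set q := Qform α β ξ χ γ with hqdef
    have hs : Real.sqrt q < 1 := by
      have := Real.sqrt_lt_sqrt hq0.le hQ
      simpa using this
    have hs0 : (0:ℝ) < Real.sqrt q := Real.sqrt_pos.mpr hq0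
    have hd : (0:ℝ) < 1 - Real.sqrt q := by linarith
    -- derivative of the outer scalar function
    have hg : HasDerivAt (fun t : ℝ => -(1 / β ^ 2) * (Real.sqrt t + Real.log (1 - Real.sqrt t)))
        (1 / (2 * β ^ 2 * (1 - Real.sqrt q))) q := by
      have h1 : HasDerivAt Real.sqrt (1 / (2 * Real.sqrt q)) q := Real.hasDerivAt_sqrt hq0.ne'
      have h2 : HasDerivAt (fun t : ℝ => 1 - Real.sqrt t) (-(1 / (2 * Real.sqrt q))) q :=
        h1.const_sub 1
      have h3 : HasDerivAt (fun t : ℝ => Real.log (1 - Real.sqrt t))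
          ((1 - Real.sqrt q)⁻¹ * -(1 / (2 * Real.sqrt q))) q :=
        HasDerivAt.comp q (h := fun t : ℝ => 1 - Real.sqrt t) (Real.hasDerivAt_log hd.ne') h2
      have h4 := (h1.add h3).const_mul (-(1 / β ^ 2))
      refine h4.congr_deriv ?_
      field_simp
      ring
    -- derivative of the quadratic form
    have hc1 : ∀ i : Fin 2, HasFDerivAt
        (fun p : (Fin 2 → ℝ) × (Fin 2 → Fin 2 → ℝ) => p.1 i)
        ((ContinuousLinearMap.proj i).comp
          (ContinuousLinearMap.fst ℝ (Fin 2 → ℝ) (Fin 2 → Fin 2 → ℝ))) (χ, γ) :=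
      fun i => ((ContinuousLinearMap.proj i).comp
          (ContinuousLinearMap.fst ℝ (Fin 2 → ℝ) (Fin 2 → Fin 2 → ℝ))).hasFDerivAt
    have hc2 : ∀ i j : Fin 2, HasFDerivAt
        (fun p : (Fin 2 → ℝ) × (Fin 2 → Fin 2 → ℝ) => p.2 i j)
        ((ContinuousLinearMap.proj j).comp ((ContinuousLinearMap.proj i).comp
          (ContinuousLinearMap.snd ℝ (Fin 2 → ℝ) (Fin 2 → Fin 2 → ℝ)))) (χ, γ) :=
      fun i j => ((ContinuousLinearMap.proj j).comp ((ContinuousLinearMap.proj i).comp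
          (ContinuousLinearMap.snd ℝ (Fin 2 → ℝ) (Fin 2 → Fin 2 → ℝ)))).hasFDerivAt
    have hA := (((hc1 0).mul (hc1 0)).add ((hc1 1).mul (hc1 1))).const_mul (α ^ 2)
    have hB0 := (((hc2 0 0).mul (hc2 0 0)).add ((hc2 0 1).mul (hc2 0 1))).add
      ((hc2 1 0).mul (hc2 1 0))
    have hB := (hB0.add ((hc2 1 1).mul (hc2 1 1))).const_mul (ξ ^ 2)
    have hF0 := (hA.add hB).const_mul (β ^ 2)
    have heq : (fun p : (Fin 2 → ℝ) × (Fin 2 → Fin 2 → ℝ) => Qform α β ξ p.1 p.2) =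
        (fun y : (Fin 2 → ℝ) × (Fin 2 → Fin 2 → ℝ) =>
          β ^ 2 * (α ^ 2 * (y.1 0 * y.1 0 + y.1 1 * y.1 1) +
          ξ ^ 2 * (y.2 0 0 * y.2 0 0 + y.2 0 1 * y.2 0 1 + y.2 1 0 * y.2 1 0 +
            y.2 1 1 * y.2 1 1))) := by
      funext p; simp only [Qform]; ring
    replace hF0 : HasFDerivAt (fun p : (Fin 2 → ℝ) × (Fin 2 → Fin 2 → ℝ) => Qform α β ξ p.1 p.2) _ (χ, γ) :=
      hF0.congr_of_eventuallyEq (Filter.Eventually.of_forall fun p => by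
        simp only [Qform, Pi.mul_apply, Pi.add_apply]; ring)
    -- compose
    have hcomp := hg.comp_hasFDerivAt (χ, γ) hF0
    refine ⟨_, hcomp, fun a b => ?_⟩
    · simp only [ContinuousLinearMap.smul_apply, ContinuousLinearMap.add_apply,
        ContinuousLinearMap.coe_comp', Function.comp_apply,
        ContinuousLinearMap.coe_fst', ContinuousLinearMap.coe_snd',
        ContinuousLinearMap.proj_apply, smul_eq_mul, Tmap]
      rw [← hqdef]
      field_simp
      ring
end
end

section
/- For all positive real parameters α, β, ξ and all stresses m ∈ ℝ², τ ∈ ℝ^{2×2}, the complementary strain-energy density W* is Fréchet differentiable at (m, τ) (as a function on ℝ² × ℝ^{2×2}), and its derivative is the linear map (a, b) ↦ χ₁·a₁ + χ₂·a₂ + γ₁₁·b₁₁ + γ₁₂·b₁₂ + γ₂₁·b₂₁ + γ₂₂·b₂₂, where (χ, γ) = S(m, τ); that is, the strains are the gradients of W*. -/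
noncomputable section

/- ### Auxiliary material -/

abbrev E2 := (Fin 2 → ℝ) × (Fin 2 → Fin 2 → ℝ)

/-- Projection onto the `i`-th component of the first factor. -/
def c1 (i : Fin 2) : E2 →L[ℝ] ℝ :=
  (ContinuousLinearMap.proj i).comp (ContinuousLinearMap.fst ℝ (Fin 2 → ℝ) (Fin 2 → Fin 2 → ℝ))

/-- Projection onto the `(i,j)`-th component of the second factor. -/
def c2 (i j : Fin 2) : E2 →L[ℝ] ℝ :=
  (ContinuousLinearMap.proj j).comp ((ContinuousLinearMap.proj i).comp
    (ContinuousLinearMap.snd ℝ (Fin 2 → ℝ) (Fin 2 → Fin 2 → ℝ)))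

lemma hasFDerivAt_Qstar_aux (α β ξ : ℝ) (m : Fin 2 → ℝ) (τ : Fin 2 → Fin 2 → ℝ) :
    ∃ D : E2 →L[ℝ] ℝ,
      HasFDerivAt (fun p : E2 => Qstar α β ξ p.1 p.2) D (m, τ) ∧
      ∀ (a : Fin 2 → ℝ) (b : Fin 2 → Fin 2 → ℝ),
        D (a, b) = β ^ 2 * ((2 * m 0 * a 0 + 2 * m 1 * a 1) / α ^ 2 +
          (2 * τ 0 0 * b 0 0 + 2 * τ 0 1 * b 0 1 + 2 * τ 1 0 * b 1 0 + 2 * τ 1 1 * b 1 1) / ξ ^ 2) := by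
  have h1 : ∀ i, HasFDerivAt (fun p : E2 => p.1 i) (c1 i) (m, τ) := fun i => (c1 i).hasFDerivAt
  have h2 : ∀ i j, HasFDerivAt (fun p : E2 => p.2 i j) (c2 i j) (m, τ) :=
    fun i j => (c2 i j).hasFDerivAt
  have hq : HasFDerivAt (fun p : E2 =>
      β ^ 2 * ((α ^ 2)⁻¹ * ((p.1 0) * (p.1 0) + (p.1 1) * (p.1 1)) +
        (ξ ^ 2)⁻¹ * ((p.2 0 0) * (p.2 0 0) + (p.2 0 1) * (p.2 0 1) + (p.2 1 0) * (p.2 1 0)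
          + (p.2 1 1) * (p.2 1 1)))) _ (m, τ) :=
    (((((h1 0).mul (h1 0)).add ((h1 1).mul (h1 1))).const_mul ((α ^ 2)⁻¹)).add
      ((((((h2 0 0).mul (h2 0 0)).add ((h2 0 1).mul (h2 0 1))).add
        ((h2 1 0).mul (h2 1 0))).add ((h2 1 1).mul (h2 1 1))).const_mul ((ξ ^ 2)⁻¹))).const_mul
      (β ^ 2)
  have hfe : (fun p : E2 => Qstar α β ξ p.1 p.2) = (fun p : E2 =>
      β ^ 2 * ((α ^ 2)⁻¹ * ((p.1 0) * (p.1 0) + (p.1 1) * (p.1 1)) +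
        (ξ ^ 2)⁻¹ * ((p.2 0 0) * (p.2 0 0) + (p.2 0 1) * (p.2 0 1) + (p.2 1 0) * (p.2 1 0)
          + (p.2 1 1) * (p.2 1 1)))) := by
    funext p; unfold Qstar; ring
  rw [← hfe] at hq
  exact ⟨_, hq, fun a b => by simp [c1, c2]; ring⟩

lemma log_one_add_le_self {t : ℝ} (ht : 0 ≤ t) : Real.log (1 + t) ≤ t := by
  have := Real.log_le_sub_one_of_pos (x := 1 + t) (by linarith)
  linarith

lemma self_sub_log_le_sq {t : ℝ} (ht : 0 ≤ t) : t - Real.log (1 + t) ≤ t ^ 2 := by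
  have h1 : (0:ℝ) < 1 + t := by linarith
  have h2 := Real.log_le_sub_one_of_pos (x := (1 + t)⁻¹) (by positivity)
  rw [Real.log_inv] at h2
  have h3 : (1 + t)⁻¹ - 1 = -(t / (1 + t)) := by field_simp; ring
  have h4 : t - t / (1 + t) = t ^ 2 / (1 + t) := by field_simp; ring
  have h5 : t ^ 2 / (1 + t) ≤ t ^ 2 := div_le_self (by positivity) (by linarith)
  rw [h3] at h2
  linarith

set_option maxHeartbeats 1000000 in
theorem hasFDerivAt_Wstar (α β ξ : ℝ) (hα : 0 < α) (hβ : 0 < β) (hξ : 0 < ξ)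
    (m : Fin 2 → ℝ) (τ : Fin 2 → Fin 2 → ℝ) :
    ∃ L : ((Fin 2 → ℝ) × (Fin 2 → Fin 2 → ℝ)) →L[ℝ] ℝ,
      HasFDerivAt
        (fun p : (Fin 2 → ℝ) × (Fin 2 → Fin 2 → ℝ) => Wstar α β ξ p.1 p.2) L (m, τ) ∧
      ∀ (a : Fin 2 → ℝ) (b : Fin 2 → Fin 2 → ℝ),
        L (a, b) =
          (Smap α β ξ m τ).1 0 * a 0 + (Smap α β ξ m τ).1 1 * a 1 +
          (Smap α β ξ m τ).2 0 0 * b 0 0 + (Smap α β ξ m τ).2 0 1 * b 0 1 +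
          (Smap α β ξ m τ).2 1 0 * b 1 0 + (Smap α β ξ m τ).2 1 1 * b 1 1 := by
  have hα2 : (0:ℝ) < α ^ 2 := by positivity
  have hξ2 : (0:ℝ) < ξ ^ 2 := by positivity
  have hβ2 : (0:ℝ) < β ^ 2 := by positivity
  have hQnonneg : 0 ≤ Qstar α β ξ m τ := by unfold Qstar; positivity
  rcases eq_or_lt_of_le hQnonneg with hQ0 | hQpos
  · -- degenerate case: Q* = 0, so m = 0 and τ = 0.
    have key : ((m 0) ^ 2 + (m 1) ^ 2) / α ^ 2 +
        ((τ 0 0) ^ 2 + (τ 0 1) ^ 2 + (τ 1 0) ^ 2 + (τ 1 1) ^ 2) / ξ ^ 2 = 0 := by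
      have e : β ^ 2 * (((m 0) ^ 2 + (m 1) ^ 2) / α ^ 2 +
          ((τ 0 0) ^ 2 + (τ 0 1) ^ 2 + (τ 1 0) ^ 2 + (τ 1 1) ^ 2) / ξ ^ 2) = 0 := hQ0.symm
      exact (mul_eq_zero.mp e).resolve_left (ne_of_gt hβ2)
    have p1 : (0:ℝ) ≤ ((m 0) ^ 2 + (m 1) ^ 2) / α ^ 2 := by positivity
    have p2 : (0:ℝ) ≤ ((τ 0 0) ^ 2 + (τ 0 1) ^ 2 + (τ 1 0) ^ 2 + (τ 1 1) ^ 2) / ξ ^ 2 := by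
      positivity
    have hs1 : (m 0) ^ 2 + (m 1) ^ 2 = 0 := by
      have hd : ((m 0) ^ 2 + (m 1) ^ 2) / α ^ 2 = 0 := by linarith
      rcases div_eq_zero_iff.mp hd with h | h
      · exact h
      · exact absurd h (ne_of_gt hα2)
    have hs2 : (τ 0 0) ^ 2 + (τ 0 1) ^ 2 + (τ 1 0) ^ 2 + (τ 1 1) ^ 2 = 0 := by
      have hd : ((τ 0 0) ^ 2 + (τ 0 1) ^ 2 + (τ 1 0) ^ 2 + (τ 1 1) ^ 2) / ξ ^ 2 = 0 := by
        linarith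
      rcases div_eq_zero_iff.mp hd with h | h
      · exact h
      · exact absurd h (ne_of_gt hξ2)
    have hm0 : m 0 = 0 := by
      have : (m 0) ^ 2 = 0 := by nlinarith [sq_nonneg (m 0), sq_nonneg (m 1)]
      exact sq_eq_zero_iff.mp this
    have hm1 : m 1 = 0 := by
      have : (m 1) ^ 2 = 0 := by nlinarith [sq_nonneg (m 0), sq_nonneg (m 1)]
      exact sq_eq_zero_iff.mp this
    have ht00 : τ 0 0 = 0 := by
      have : (τ 0 0) ^ 2 = 0 := by
        nlinarith [sq_nonneg (τ 0 0), sq_nonneg (τ 0 1), sq_nonneg (τ 1 0), sq_nonneg (τ 1 1)]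
      exact sq_eq_zero_iff.mp this
    have ht01 : τ 0 1 = 0 := by
      have : (τ 0 1) ^ 2 = 0 := by
        nlinarith [sq_nonneg (τ 0 0), sq_nonneg (τ 0 1), sq_nonneg (τ 1 0), sq_nonneg (τ 1 1)]
      exact sq_eq_zero_iff.mp this
    have ht10 : τ 1 0 = 0 := by
      have : (τ 1 0) ^ 2 = 0 := by
        nlinarith [sq_nonneg (τ 0 0), sq_nonneg (τ 0 1), sq_nonneg (τ 1 0), sq_nonneg (τ 1 1)]
      exact sq_eq_zero_iff.mp this
    have ht11 : τ 1 1 = 0 := by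
      have : (τ 1 1) ^ 2 = 0 := by
        nlinarith [sq_nonneg (τ 0 0), sq_nonneg (τ 0 1), sq_nonneg (τ 1 0), sq_nonneg (τ 1 1)]
      exact sq_eq_zero_iff.mp this
    obtain rfl : m = 0 := by funext i; fin_cases i <;> simp [hm0, hm1]
    obtain rfl : τ = 0 := by funext i j; fin_cases i <;> fin_cases j <;>
      simp [ht00, ht01, ht10, ht11]
    refine ⟨0, ?_, ?_⟩
    · rw [hasFDerivAt_iff_isLittleO_nhds_zero]
      have hW0 : Wstar α β ξ (0 : Fin 2 → ℝ) (0 : Fin 2 → Fin 2 → ℝ) = 0 := by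
        simp [Wstar, Qstar]
      have hsimp : (fun h : E2 => Wstar α β ξ (((0 : Fin 2 → ℝ), (0 : Fin 2 → Fin 2 → ℝ)) + h).1
            (((0 : Fin 2 → ℝ), (0 : Fin 2 → Fin 2 → ℝ)) + h).2 -
          Wstar α β ξ ((0 : Fin 2 → ℝ), (0 : Fin 2 → Fin 2 → ℝ)).1
            ((0 : Fin 2 → ℝ), (0 : Fin 2 → Fin 2 → ℝ)).2 -
          (0 : E2 →L[ℝ] ℝ) h) = fun h : E2 => Wstar α β ξ h.1 h.2 := by
        funext h
        simp [hW0, Prod.fst_add, Prod.snd_add]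
      rw [hsimp, Asymptotics.isLittleO_iff]
      intro ε hε
      have hC : (0:ℝ) < 2 / α ^ 2 + 4 / ξ ^ 2 := by positivity
      rw [Metric.eventually_nhds_iff]
      refine ⟨ε / (2 / α ^ 2 + 4 / ξ ^ 2), by positivity, fun p hp => ?_⟩
      rw [dist_zero_right] at hp
      have hb1 : |p.1 0| ≤ ‖p‖ := le_trans (norm_le_pi_norm p.1 0) (norm_fst_le p)
      have hb2 : |p.1 1| ≤ ‖p‖ := le_trans (norm_le_pi_norm p.1 1) (norm_fst_le p)
      have hb : ∀ i j, |p.2 i j| ≤ ‖p‖ := fun i j =>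
        le_trans (norm_le_pi_norm (p.2 i) j)
          (le_trans (norm_le_pi_norm p.2 i) (norm_snd_le p))
      have hsq : ∀ x : ℝ, |x| ≤ ‖p‖ → x ^ 2 ≤ ‖p‖ ^ 2 := fun x hx => by
        rw [← sq_abs]; exact pow_le_pow_left₀ (abs_nonneg x) hx 2
      have hQp : (0:ℝ) ≤ Qstar α β ξ p.1 p.2 := by unfold Qstar; positivity
      have hQle : Qstar α β ξ p.1 p.2 ≤ β ^ 2 * ((2 / α ^ 2 + 4 / ξ ^ 2) * ‖p‖ ^ 2) := by
        have e1 := hsq _ hb1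
        have e2 := hsq _ hb2
        have e3 := hsq _ (hb 0 0)
        have e4 := hsq _ (hb 0 1)
        have e5 := hsq _ (hb 1 0)
        have e6 := hsq _ (hb 1 1)
        calc Qstar α β ξ p.1 p.2
            = β ^ 2 * (((p.1 0) ^ 2 + (p.1 1) ^ 2) / α ^ 2 +
              ((p.2 0 0) ^ 2 + (p.2 0 1) ^ 2 + (p.2 1 0) ^ 2 + (p.2 1 1) ^ 2) / ξ ^ 2) := rfl
          _ ≤ β ^ 2 * ((‖p‖ ^ 2 + ‖p‖ ^ 2) / α ^ 2 +
              (‖p‖ ^ 2 + ‖p‖ ^ 2 + ‖p‖ ^ 2 + ‖p‖ ^ 2) / ξ ^ 2) := by gcongr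
          _ = β ^ 2 * ((2 / α ^ 2 + 4 / ξ ^ 2) * ‖p‖ ^ 2) := by ring
      have hWnn : 0 ≤ Wstar α β ξ p.1 p.2 := by
        have hl := log_one_add_le_self (Real.sqrt_nonneg (Qstar α β ξ p.1 p.2))
        have h0 : 0 ≤ Real.sqrt (Qstar α β ξ p.1 p.2) -
            Real.log (1 + Real.sqrt (Qstar α β ξ p.1 p.2)) := by linarith
        exact mul_nonneg (by positivity) h0
      have hWle : Wstar α β ξ p.1 p.2 ≤ (1 / β ^ 2) * Qstar α β ξ p.1 p.2 := by
        have h := self_sub_log_le_sq (Real.sqrt_nonneg (Qstar α β ξ p.1 p.2))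
        rw [Real.sq_sqrt hQp] at h
        exact mul_le_mul_of_nonneg_left h (by positivity)
      have hfinal : Wstar α β ξ p.1 p.2 ≤ (2 / α ^ 2 + 4 / ξ ^ 2) * ‖p‖ ^ 2 := by
        have h2 : (1 / β ^ 2) * Qstar α β ξ p.1 p.2 ≤
            (1 / β ^ 2) * (β ^ 2 * ((2 / α ^ 2 + 4 / ξ ^ 2) * ‖p‖ ^ 2)) :=
          mul_le_mul_of_nonneg_left hQle (by positivity)
        have h3 : (1 / β ^ 2) * (β ^ 2 * ((2 / α ^ 2 + 4 / ξ ^ 2) * ‖p‖ ^ 2)) =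
            (2 / α ^ 2 + 4 / ξ ^ 2) * ‖p‖ ^ 2 := by field_simp
        linarith
      rw [Real.norm_eq_abs, abs_of_nonneg hWnn]
      have hnp : (0:ℝ) ≤ ‖p‖ := norm_nonneg p
      have hp' : (2 / α ^ 2 + 4 / ξ ^ 2) * ‖p‖ < ε := by
        rw [lt_div_iff₀ hC] at hp
        nlinarith
      nlinarith
    · intro a b
      simp [Smap]
  · -- main case: Q* > 0
    obtain ⟨D, hD, hDval⟩ := hasFDerivAt_Qstar_aux α β ξ m τ
    have hs : (0:ℝ) < Real.sqrt (Qstar α β ξ m τ) := Real.sqrt_pos.mpr hQpos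
    have h1 : HasDerivAt Real.sqrt (1 / (2 * Real.sqrt (Qstar α β ξ m τ)))
        (Qstar α β ξ m τ) := Real.hasDerivAt_sqrt (ne_of_gt hQpos)
    have h2 : HasDerivAt (fun s => 1 + Real.sqrt s)
        (1 / (2 * Real.sqrt (Qstar α β ξ m τ))) (Qstar α β ξ m τ) := h1.const_add 1
    have h3 : HasDerivAt (fun s => Real.log (1 + Real.sqrt s))
        ((1 / (2 * Real.sqrt (Qstar α β ξ m τ))) / (1 + Real.sqrt (Qstar α β ξ m τ)))
        (Qstar α β ξ m τ) := h2.log (by positivity)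
    have h4 : HasDerivAt (fun s => (1 / β ^ 2) * (Real.sqrt s - Real.log (1 + Real.sqrt s)))
        ((1 / β ^ 2) * (1 / (2 * Real.sqrt (Qstar α β ξ m τ)) -
          (1 / (2 * Real.sqrt (Qstar α β ξ m τ))) / (1 + Real.sqrt (Qstar α β ξ m τ))))
        (Qstar α β ξ m τ) := (h1.sub h3).const_mul _
    have h5 := h4.comp_hasFDerivAt (m, τ) hD
    refine ⟨_, h5, fun a b => ?_⟩
    rw [ContinuousLinearMap.smul_apply, hDval a b, Smap]
    have h6 : (0:ℝ) < 1 + Real.sqrt (Qstar α β ξ m τ) := by positivity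
    have hsne := hs.ne'
    have hαne := hα.ne'
    have hξne := hξ.ne'
    have hβne := hβ.ne'
    have h6ne := h6.ne'
    simp only [smul_eq_mul]
    field_simp
    ring
end
end

section
/- Let α, β, ξ be positive reals and let χ ∈ ℝ², γ ∈ ℝ^{2×2} satisfy 0 < Q(χ, γ) < 1, and write q = Q(χ, γ). Then W is twice Fréchet differentiable at (χ, γ), and for all a = (a₁, a₂) ∈ ℝ² and b = (b₁₁, b₁₂, b₂₁, b₂₂) ∈ ℝ^{2×2}, the second-derivative quadratic form satisfies D²W(χ, γ)[(a, b), (a, b)] = (1/β²)·Q(a, b)/(1 − √q) + (β²/(√q·(1 − √q)²))·(α²·(a₁·χ₁ + a₂·χ₂) + ξ²·(b₁₁·γ₁₁ + b₁₂·γ₁₂ + b₂₁·γ₂₁ + b₂₂·γ₂₂))². -/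
noncomputable section

set_option maxHeartbeats 4000000
set_option synthInstance.maxHeartbeats 400000

namespace SDW

abbrev EE := (Fin 2 → ℝ) × (Fin 2 → Fin 2 → ℝ)

def ec (i : Fin 2) : EE →L[ℝ] ℝ :=
  (ContinuousLinearMap.proj i).comp (ContinuousLinearMap.fst ℝ _ _)

def eg (i j : Fin 2) : EE →L[ℝ] ℝ :=
  ((ContinuousLinearMap.proj j : (Fin 2 → ℝ) →L[ℝ] ℝ).comp
    (ContinuousLinearMap.proj i : (Fin 2 → Fin 2 → ℝ) →L[ℝ] (Fin 2 → ℝ))).comp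
    (ContinuousLinearMap.snd ℝ (Fin 2 → ℝ) (Fin 2 → Fin 2 → ℝ))

def Bf (α β ξ : ℝ) : EE →L[ℝ] EE →L[ℝ] ℝ :=
  β ^ 2 • (α ^ 2 • ((ec 0).smulRight (ec 0) + (ec 1).smulRight (ec 1)) +
    ξ ^ 2 • ((eg 0 0).smulRight (eg 0 0) + (eg 0 1).smulRight (eg 0 1) +
      (eg 1 0).smulRight (eg 1 0) + (eg 1 1).smulRight (eg 1 1)))

lemma Bf_apply (α β ξ : ℝ) (p u : EE) :
    Bf α β ξ p u = β ^ 2 * (α ^ 2 * (p.1 0 * u.1 0 + p.1 1 * u.1 1) +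
      ξ ^ 2 * (p.2 0 0 * u.2 0 0 + p.2 0 1 * u.2 0 1 +
        p.2 1 0 * u.2 1 0 + p.2 1 1 * u.2 1 1)) := by
  simp [Bf, ec, eg, ContinuousLinearMap.smul_apply, ContinuousLinearMap.add_apply,
    ContinuousLinearMap.smulRight_apply, ContinuousLinearMap.comp_apply,
    ContinuousLinearMap.proj_apply, smul_eq_mul]
  ring

variable {α β ξ : ℝ}

lemma Bf_symm (α β ξ : ℝ) (p u : EE) : Bf α β ξ p u = Bf α β ξ u p := by
  rw [Bf_apply, Bf_apply]; ring

lemma Qform_eq (α β ξ : ℝ) (p : EE) : Qform α β ξ p.1 p.2 = Bf α β ξ p p := by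
  rw [Bf_apply, Qform]; ring

lemma hasFDerivAt_Q (α β ξ : ℝ) (p : EE) :
    HasFDerivAt (fun p : EE => Bf α β ξ p p) ((2 : ℝ) • Bf α β ξ p) p := by
  have hb := (Bf α β ξ).isBoundedBilinearMap
  have hd : HasFDerivAt (fun x : EE => (x, x))
      ((ContinuousLinearMap.id ℝ EE).prod (ContinuousLinearMap.id ℝ EE)) p :=
    (hasFDerivAt_id p).prodMk (hasFDerivAt_id p)
  have h : HasFDerivAt ((fun x : EE × EE => Bf α β ξ x.1 x.2) ∘ (fun x : EE => (x, x)))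
      ((hb.deriv (p, p)).comp ((ContinuousLinearMap.id ℝ EE).prod (ContinuousLinearMap.id ℝ EE)))
      p := HasFDerivAt.comp p (hb.hasFDerivAt (p, p)) hd
  convert h using 1
  · rfl
  · rfl
  refine ContinuousLinearMap.ext fun u => ?_
  simp [IsBoundedBilinearMap.deriv_apply, two_smul, Bf_symm α β ξ u p]

lemma hasDerivAt_g (hβ : β ≠ 0) {q : ℝ} (h0 : 0 < q) (h1 : q < 1) :
    HasDerivAt (fun q => -(1 / β ^ 2) * (Real.sqrt q + Real.log (1 - Real.sqrt q)))
      ((2 * (β ^ 2 * (1 - Real.sqrt q)))⁻¹) q := by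
  have hs0 : 0 < Real.sqrt q := Real.sqrt_pos.2 h0
  have hs1 : Real.sqrt q < 1 := by
    rw [show (1 : ℝ) = Real.sqrt 1 by simp]
    exact Real.sqrt_lt_sqrt h0.le h1
  have h1s : 0 < 1 - Real.sqrt q := by linarith
  have hsd : HasDerivAt Real.sqrt (1 / (2 * Real.sqrt q)) q := Real.hasDerivAt_sqrt h0.ne'
  have h2 : HasDerivAt (fun q : ℝ => 1 - Real.sqrt q) (-(1 / (2 * Real.sqrt q))) q := by
    exact hsd.const_sub 1
  have h3 : HasDerivAt (fun q : ℝ => Real.log (1 - Real.sqrt q))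
      (-(1 / (2 * Real.sqrt q)) / (1 - Real.sqrt q)) q := h2.log h1s.ne'
  have h4 := (hsd.add h3).const_mul (-(1 / β ^ 2))
  convert h4 using 1
  · rfl
  · rfl
  · rfl
  field_simp
  ring

lemma hasDerivAt_c (hβ : β ≠ 0) {q : ℝ} (h0 : 0 < q) (h1 : q < 1) :
    HasDerivAt (fun q : ℝ => (β ^ 2 * (1 - Real.sqrt q))⁻¹)
      ((2 * Real.sqrt q * (β ^ 2 * (1 - Real.sqrt q) ^ 2))⁻¹) q := by
  have hs0 : 0 < Real.sqrt q := Real.sqrt_pos.2 h0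
  have hs1 : Real.sqrt q < 1 := by
    rw [show (1 : ℝ) = Real.sqrt 1 by simp]
    exact Real.sqrt_lt_sqrt h0.le h1
  have h1s : 0 < 1 - Real.sqrt q := by linarith
  have hsd : HasDerivAt Real.sqrt (1 / (2 * Real.sqrt q)) q := Real.hasDerivAt_sqrt h0.ne'
  have h2 : HasDerivAt (fun q : ℝ => β ^ 2 * (1 - Real.sqrt q))
      (β ^ 2 * (-(1 / (2 * Real.sqrt q)))) q := by
    have : HasDerivAt (fun q : ℝ => 1 - Real.sqrt q) (-(1 / (2 * Real.sqrt q))) q := by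
      exact hsd.const_sub 1
    exact this.const_mul (β ^ 2)
  have hne : β ^ 2 * (1 - Real.sqrt q) ≠ 0 :=
    mul_ne_zero (pow_ne_zero 2 hβ) h1s.ne'
  have h3 := h2.inv hne
  convert h3 using 1
  · rfl
  · rfl
  · rfl
  field_simp

lemma hasFDerivAt_W (hβ : β ≠ 0) (p : EE) (h0 : 0 < Bf α β ξ p p) (h1 : Bf α β ξ p p < 1) :
    HasFDerivAt (fun x : EE => Wdens α β ξ x.1 x.2)
      ((β ^ 2 * (1 - Real.sqrt (Bf α β ξ p p)))⁻¹ • Bf α β ξ p) p := by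
  have hg := hasDerivAt_g hβ h0 h1
  have hQ := hasFDerivAt_Q α β ξ p
  have h := hg.comp_hasFDerivAt_of_eq p hQ rfl
  have heq : (fun x : EE => Wdens α β ξ x.1 x.2) =
      (fun q => -(1 / β ^ 2) * (Real.sqrt q + Real.log (1 - Real.sqrt q))) ∘
        (fun x : EE => Bf α β ξ x x) := by
    funext x
    simp [Wdens, Function.comp, Qform_eq]
  rw [heq]
  convert h using 1
  · rfl
  · rfl
  · rfl
  · rfl
  · rfl
  rw [smul_smul]
  congr 1
  have h1s : (1 : ℝ) - Real.sqrt (Bf α β ξ p p) ≠ 0 := by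
    have : Real.sqrt (Bf α β ξ p p) < 1 := by
      rw [show (1 : ℝ) = Real.sqrt 1 by simp]
      exact Real.sqrt_lt_sqrt h0.le h1
    linarith
  field_simp

end SDW

/-- explicit formula for the second-derivative quadratic form of
the strain-energy density `W` at a strain `(χ, γ)` with `0 < Q(χ, γ) < 1`. -/
theorem secondDeriv_Wdens (α β ξ : ℝ) (hα : 0 < α) (hβ : 0 < β) (hξ : 0 < ξ)
    (χ : Fin 2 → ℝ) (γ : Fin 2 → Fin 2 → ℝ)
    (h0 : 0 < Qform α β ξ χ γ) (h1 : Qform α β ξ χ γ < 1) :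
    ∃ D : ((Fin 2 → ℝ) × (Fin 2 → Fin 2 → ℝ)) →L[ℝ]
        ((Fin 2 → ℝ) × (Fin 2 → Fin 2 → ℝ)) →L[ℝ] ℝ,
      HasFDerivAt
        (fderiv ℝ (fun p : (Fin 2 → ℝ) × (Fin 2 → Fin 2 → ℝ) => Wdens α β ξ p.1 p.2))
        D (χ, γ) ∧
      ∀ (a : Fin 2 → ℝ) (b : Fin 2 → Fin 2 → ℝ),
        D (a, b) (a, b) =
          (1 / β ^ 2) * Qform α β ξ a b / (1 - Real.sqrt (Qform α β ξ χ γ)) +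
          (β ^ 2 / (Real.sqrt (Qform α β ξ χ γ) *
              (1 - Real.sqrt (Qform α β ξ χ γ)) ^ 2)) *
            (α ^ 2 * (a 0 * χ 0 + a 1 * χ 1) +
             ξ ^ 2 * (b 0 0 * γ 0 0 + b 0 1 * γ 0 1 +
                      b 1 0 * γ 1 0 + b 1 1 * γ 1 1)) ^ 2 := by
  classical
  set p₀ : SDW.EE := (χ, γ) with hp₀
  have hQeq : Qform α β ξ χ γ = SDW.Bf α β ξ p₀ p₀ := SDW.Qform_eq α β ξ p₀
  have h0' : 0 < SDW.Bf α β ξ p₀ p₀ := hQeq ▸ h0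
  have h1' : SDW.Bf α β ξ p₀ p₀ < 1 := hQeq ▸ h1
  have hβ' : β ≠ 0 := hβ.ne'
  set q : ℝ := SDW.Bf α β ξ p₀ p₀ with hq
  have hs0 : 0 < Real.sqrt q := Real.sqrt_pos.2 h0'
  have hs1 : Real.sqrt q < 1 := by
    rw [show (1 : ℝ) = Real.sqrt 1 by simp]
    exact Real.sqrt_lt_sqrt h0'.le h1'
  have h1s : 0 < 1 - Real.sqrt q := by linarith
  have hQ := SDW.hasFDerivAt_Q α β ξ p₀
  have hκ : HasFDerivAt (fun p : SDW.EE => (β ^ 2 * (1 - Real.sqrt (SDW.Bf α β ξ p p)))⁻¹)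
      (((2 * Real.sqrt q * (β ^ 2 * (1 - Real.sqrt q) ^ 2))⁻¹ : ℝ) •
        ((2 : ℝ) • SDW.Bf α β ξ p₀)) p₀ :=
    (SDW.hasDerivAt_c hβ' h0' h1').comp_hasFDerivAt_of_eq p₀ hQ rfl
  have hBd : HasFDerivAt (fun p : SDW.EE => SDW.Bf α β ξ p) (SDW.Bf α β ξ) p₀ :=
    (SDW.Bf α β ξ).hasFDerivAt
  have hF := hκ.smul hBd
  have hU : IsOpen {p : SDW.EE | 0 < SDW.Bf α β ξ p p ∧ SDW.Bf α β ξ p p < 1} := by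
    have hc : Continuous fun p : SDW.EE => SDW.Bf α β ξ p p := by
      simp only [SDW.Bf_apply]
      fun_prop
    exact (isOpen_lt continuous_const hc).inter (isOpen_lt hc continuous_const)
  have hev : (fun p : SDW.EE => fderiv ℝ (fun x : SDW.EE => Wdens α β ξ x.1 x.2) p)
      =ᶠ[nhds p₀] fun p : SDW.EE =>
        (β ^ 2 * (1 - Real.sqrt (SDW.Bf α β ξ p p)))⁻¹ • SDW.Bf α β ξ p := by
    filter_upwards [hU.mem_nhds ⟨h0', h1'⟩] with p hp
    exact (SDW.hasFDerivAt_W hβ' p hp.1 hp.2).fderiv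
  refine ⟨_, hF.congr_of_eventuallyEq hev, fun a b => ?_⟩
  have hBa : SDW.Bf α β ξ p₀ (a, b) = β ^ 2 *
      (α ^ 2 * (a 0 * χ 0 + a 1 * χ 1) +
       ξ ^ 2 * (b 0 0 * γ 0 0 + b 0 1 * γ 0 1 + b 1 0 * γ 1 0 + b 1 1 * γ 1 1)) := by
    rw [hp₀, SDW.Bf_apply]; ring
  have hBab : SDW.Bf α β ξ (a, b) (a, b) = Qform α β ξ a b := by
    rw [SDW.Bf_apply, Qform]; ring
  simp only [ContinuousLinearMap.add_apply, ContinuousLinearMap.smul_apply,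
    ContinuousLinearMap.smulRight_apply, smul_eq_mul]
  rw [hBa, hBab, hQeq]
  set M : ℝ := α ^ 2 * (a 0 * χ 0 + a 1 * χ 1) +
       ξ ^ 2 * (b 0 0 * γ 0 0 + b 0 1 * γ 0 1 + b 1 0 * γ 1 0 + b 1 1 * γ 1 1)
  rw [← hq]
  field_simp
  all_goals first | ring1 | tauto
end
end

section
/- The constitutive map is monotone: for all positive reals α, β, ξ and all strains (χ, γ) and (χ′, γ′) in ℝ² × ℝ^{2×2} with Q(χ, γ) < 1 and Q(χ′, γ′) < 1, the stresses (m, τ) = T(χ, γ) and (m′, τ′) = T(χ′, γ′) satisfy Σᵢ (mᵢ − m′ᵢ)·(χᵢ − χ′ᵢ) + Σᵢⱼ (τᵢⱼ − τ′ᵢⱼ)·(γᵢⱼ − γ′ᵢⱼ) ≥ 0. -/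
noncomputable section

/-- Auxiliary monotonicity lemma in raw real variables. -/
theorem tmap_mono_aux (α β ξ x0 x1 g00 g01 g10 g11 y0 y1 h00 h01 h10 h11 q q' : ℝ)
    (hα : 0 < α) (hβ : 0 < β) (hξ : 0 < ξ)
    (hq0 : 0 ≤ q) (hq0' : 0 ≤ q') (hq1 : q < 1) (hq1' : q' < 1)
    (hq2 : q ^ 2 = β ^ 2 * (α ^ 2 * (x0 ^ 2 + x1 ^ 2) +
      ξ ^ 2 * (g00 ^ 2 + g01 ^ 2 + g10 ^ 2 + g11 ^ 2)))
    (hq2' : q' ^ 2 = β ^ 2 * (α ^ 2 * (y0 ^ 2 + y1 ^ 2) +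
      ξ ^ 2 * (h00 ^ 2 + h01 ^ 2 + h10 ^ 2 + h11 ^ 2))) :
    0 ≤ (α ^ 2 * x0 / (1 - q) - α ^ 2 * y0 / (1 - q')) * (x0 - y0) +
        (α ^ 2 * x1 / (1 - q) - α ^ 2 * y1 / (1 - q')) * (x1 - y1) +
        (ξ ^ 2 * g00 / (1 - q) - ξ ^ 2 * h00 / (1 - q')) * (g00 - h00) +
        (ξ ^ 2 * g01 / (1 - q) - ξ ^ 2 * h01 / (1 - q')) * (g01 - h01) +
        (ξ ^ 2 * g10 / (1 - q) - ξ ^ 2 * h10 / (1 - q')) * (g10 - h10) +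
        (ξ ^ 2 * g11 / (1 - q) - ξ ^ 2 * h11 / (1 - q')) * (g11 - h11) := by
  have hd : 0 < 1 - q := by linarith
  have hd' : 0 < 1 - q' := by linarith
  set A := α ^ 2 * (x0 ^ 2 + x1 ^ 2) + ξ ^ 2 * (g00 ^ 2 + g01 ^ 2 + g10 ^ 2 + g11 ^ 2) with hA
  set B := α ^ 2 * (y0 ^ 2 + y1 ^ 2) + ξ ^ 2 * (h00 ^ 2 + h01 ^ 2 + h10 ^ 2 + h11 ^ 2) with hB
  set P := α ^ 2 * (x0 * y0 + x1 * y1) +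
    ξ ^ 2 * (g00 * h00 + g01 * h01 + g10 * h10 + g11 * h11) with hP
  clear_value A B P
  have hid : A * B - P ^ 2 =
      (α*x0*(α*y1) - α*x1*(α*y0))^2 +
      (α*x0*(ξ*h00) - ξ*g00*(α*y0))^2 +
      (α*x0*(ξ*h01) - ξ*g01*(α*y0))^2 +
      (α*x0*(ξ*h10) - ξ*g10*(α*y0))^2 +
      (α*x0*(ξ*h11) - ξ*g11*(α*y0))^2 +
      (α*x1*(ξ*h00) - ξ*g00*(α*y1))^2 +
      (α*x1*(ξ*h01) - ξ*g01*(α*y1))^2 +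
      (α*x1*(ξ*h10) - ξ*g10*(α*y1))^2 +
      (α*x1*(ξ*h11) - ξ*g11*(α*y1))^2 +
      (ξ*g00*(ξ*h01) - ξ*g01*(ξ*h00))^2 +
      (ξ*g00*(ξ*h10) - ξ*g10*(ξ*h00))^2 +
      (ξ*g00*(ξ*h11) - ξ*g11*(ξ*h00))^2 +
      (ξ*g01*(ξ*h10) - ξ*g10*(ξ*h01))^2 +
      (ξ*g01*(ξ*h11) - ξ*g11*(ξ*h01))^2 +
      (ξ*g10*(ξ*h11) - ξ*g11*(ξ*h10))^2 := by
    rw [hA, hB, hP]; ring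
  have hCS : P ^ 2 ≤ A * B := by
    linarith [hid, sq_nonneg (α*x0*(α*y1) - α*x1*(α*y0)),
      sq_nonneg (α*x0*(ξ*h00) - ξ*g00*(α*y0)), sq_nonneg (α*x0*(ξ*h01) - ξ*g01*(α*y0)),
      sq_nonneg (α*x0*(ξ*h10) - ξ*g10*(α*y0)), sq_nonneg (α*x0*(ξ*h11) - ξ*g11*(α*y0)),
      sq_nonneg (α*x1*(ξ*h00) - ξ*g00*(α*y1)), sq_nonneg (α*x1*(ξ*h01) - ξ*g01*(α*y1)),
      sq_nonneg (α*x1*(ξ*h10) - ξ*g10*(α*y1)), sq_nonneg (α*x1*(ξ*h11) - ξ*g11*(α*y1)),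
      sq_nonneg (ξ*g00*(ξ*h01) - ξ*g01*(ξ*h00)), sq_nonneg (ξ*g00*(ξ*h10) - ξ*g10*(ξ*h00)),
      sq_nonneg (ξ*g00*(ξ*h11) - ξ*g11*(ξ*h00)), sq_nonneg (ξ*g01*(ξ*h10) - ξ*g10*(ξ*h01)),
      sq_nonneg (ξ*g01*(ξ*h11) - ξ*g11*(ξ*h01)), sq_nonneg (ξ*g10*(ξ*h11) - ξ*g11*(ξ*h10))]
  have hβ2 : (0:ℝ) < β ^ 2 := by positivity
  have h4 : (β ^ 2 * P) ^ 2 ≤ (q * q') ^ 2 := by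
    calc (β ^ 2 * P) ^ 2 = β ^ 2 * β ^ 2 * P ^ 2 := by ring
      _ ≤ β ^ 2 * β ^ 2 * (A * B) :=
          mul_le_mul_of_nonneg_left hCS (by positivity)
      _ = (β ^ 2 * A) * (β ^ 2 * B) := by ring
      _ = q ^ 2 * q' ^ 2 := by rw [hq2, hq2']
      _ = (q * q') ^ 2 := by ring
  have hPq : β ^ 2 * P ≤ q * q' := by
    calc β ^ 2 * P ≤ |β ^ 2 * P| := le_abs_self _
      _ = Real.sqrt ((β ^ 2 * P) ^ 2) := (Real.sqrt_sq_eq_abs _).symm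
      _ ≤ Real.sqrt ((q * q') ^ 2) := Real.sqrt_le_sqrt h4
      _ = |q * q'| := Real.sqrt_sq_eq_abs _
      _ = q * q' := abs_of_nonneg (mul_nonneg hq0 hq0')
  have h6 : ((1 - q) + (1 - q')) * (β ^ 2 * P) ≤ ((1 - q) + (1 - q')) * (q * q') :=
    mul_le_mul_of_nonneg_left hPq (by linarith)
  have hkey2 : 0 ≤ β ^ 2 * ((1 - q') * A + (1 - q) * B - ((1 - q) + (1 - q')) * P) := by
    have e1 : β ^ 2 * ((1 - q') * A + (1 - q) * B - ((1 - q) + (1 - q')) * P) =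
        (1 - q') * (β ^ 2 * A) + (1 - q) * (β ^ 2 * B) -
          ((1 - q) + (1 - q')) * (β ^ 2 * P) := by ring
    rw [e1, ← hq2, ← hq2']
    have e2 : (1 - q') * q ^ 2 + (1 - q) * q' ^ 2 -
        ((1 - q) + (1 - q')) * (q * q') = (q - q') ^ 2 := by ring
    linarith [h6, sq_nonneg (q - q'), e2]
  have hkey : 0 ≤ (1 - q') * A + (1 - q) * B - ((1 - q) + (1 - q')) * P :=
    nonneg_of_mul_nonneg_right hkey2 hβ2
  have heq : (α ^ 2 * x0 / (1 - q) - α ^ 2 * y0 / (1 - q')) * (x0 - y0) +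
        (α ^ 2 * x1 / (1 - q) - α ^ 2 * y1 / (1 - q')) * (x1 - y1) +
        (ξ ^ 2 * g00 / (1 - q) - ξ ^ 2 * h00 / (1 - q')) * (g00 - h00) +
        (ξ ^ 2 * g01 / (1 - q) - ξ ^ 2 * h01 / (1 - q')) * (g01 - h01) +
        (ξ ^ 2 * g10 / (1 - q) - ξ ^ 2 * h10 / (1 - q')) * (g10 - h10) +
        (ξ ^ 2 * g11 / (1 - q) - ξ ^ 2 * h11 / (1 - q')) * (g11 - h11) =
      ((1 - q') * A + (1 - q) * B - ((1 - q) + (1 - q')) * P) / ((1 - q) * (1 - q')) := by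
    rw [hA, hB, hP]
    field_simp
    ring
  rw [heq]
  exact div_nonneg hkey (le_of_lt (mul_pos hd hd'))

/-- the constitutive map `T` is monotone. -/
theorem Tmap_monotone (α β ξ : ℝ) (hα : 0 < α) (hβ : 0 < β) (hξ : 0 < ξ)
    (χ χ' : Fin 2 → ℝ) (γ γ' : Fin 2 → Fin 2 → ℝ)
    (hQ : Qform α β ξ χ γ < 1) (hQ' : Qform α β ξ χ' γ' < 1) :
    0 ≤ ((Tmap α β ξ χ γ).1 0 - (Tmap α β ξ χ' γ').1 0) * (χ 0 - χ' 0) +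
        ((Tmap α β ξ χ γ).1 1 - (Tmap α β ξ χ' γ').1 1) * (χ 1 - χ' 1) +
        ((Tmap α β ξ χ γ).2 0 0 - (Tmap α β ξ χ' γ').2 0 0) * (γ 0 0 - γ' 0 0) +
        ((Tmap α β ξ χ γ).2 0 1 - (Tmap α β ξ χ' γ').2 0 1) * (γ 0 1 - γ' 0 1) +
        ((Tmap α β ξ χ γ).2 1 0 - (Tmap α β ξ χ' γ').2 1 0) * (γ 1 0 - γ' 1 0) +
        ((Tmap α β ξ χ γ).2 1 1 - (Tmap α β ξ χ' γ').2 1 1) * (γ 1 1 - γ' 1 1) := by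
  
  have hQ0 : 0 ≤ Qform α β ξ χ γ := by unfold Qform; positivity
  have hQ0' : 0 ≤ Qform α β ξ χ' γ' := by unfold Qform; positivity
  have hq1 : Real.sqrt (Qform α β ξ χ γ) < 1 := by
    rw [show (1:ℝ) = Real.sqrt 1 by simp]
    exact Real.sqrt_lt_sqrt hQ0 hQ
  have hq1' : Real.sqrt (Qform α β ξ χ' γ') < 1 := by
    rw [show (1:ℝ) = Real.sqrt 1 by simp]
    exact Real.sqrt_lt_sqrt hQ0' hQ'
  have hq2 : (Real.sqrt (Qform α β ξ χ γ)) ^ 2 =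
      β ^ 2 * (α ^ 2 * ((χ 0) ^ 2 + (χ 1) ^ 2) +
        ξ ^ 2 * ((γ 0 0) ^ 2 + (γ 0 1) ^ 2 + (γ 1 0) ^ 2 + (γ 1 1) ^ 2)) := by
    rw [Real.sq_sqrt hQ0]; rfl
  have hq2' : (Real.sqrt (Qform α β ξ χ' γ')) ^ 2 =
      β ^ 2 * (α ^ 2 * ((χ' 0) ^ 2 + (χ' 1) ^ 2) +
        ξ ^ 2 * ((γ' 0 0) ^ 2 + (γ' 0 1) ^ 2 + (γ' 1 0) ^ 2 + (γ' 1 1) ^ 2)) := by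
    rw [Real.sq_sqrt hQ0']; rfl
  simp only [Tmap]
  exact tmap_mono_aux α β ξ (χ 0) (χ 1) (γ 0 0) (γ 0 1) (γ 1 0) (γ 1 1)
    (χ' 0) (χ' 1) (γ' 0 0) (γ' 0 1) (γ' 1 0) (γ' 1 1)
    (Real.sqrt (Qform α β ξ χ γ)) (Real.sqrt (Qform α β ξ χ' γ'))
    hα hβ hξ (Real.sqrt_nonneg _) (Real.sqrt_nonneg _) hq1 hq1' hq2 hq2'
end
end

section
/- Legendre duality between the strain energy and the complementary strain energy: for all positive reals α, β, ξ and all strains χ ∈ ℝ², γ ∈ ℝ^{2×2} with Q(χ, γ) < 1, the stresses (m, τ) = T(χ, γ) satisfy W(χ, γ) + W*(m, τ) = m₁·χ₁ + m₂·χ₂ + τ₁₁·γ₁₁ + τ₁₂·γ₁₂ + τ₂₁·γ₂₁ + τ₂₂·γ₂₂. -/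
noncomputable section

/-- Legendre duality between the strain energy and the
complementary strain energy: `W(χ, γ) + W*(T(χ, γ)) = ⟨T(χ, γ), (χ, γ)⟩`. -/
theorem legendre_duality (α β ξ : ℝ) (hα : 0 < α) (hβ : 0 < β) (hξ : 0 < ξ)
    (χ : Fin 2 → ℝ) (γ : Fin 2 → Fin 2 → ℝ) (hQ : Qform α β ξ χ γ < 1) :
    Wdens α β ξ χ γ + Wstar α β ξ (Tmap α β ξ χ γ).1 (Tmap α β ξ χ γ).2 =
      (Tmap α β ξ χ γ).1 0 * χ 0 + (Tmap α β ξ χ γ).1 1 * χ 1 +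
      (Tmap α β ξ χ γ).2 0 0 * γ 0 0 + (Tmap α β ξ χ γ).2 0 1 * γ 0 1 +
      (Tmap α β ξ χ γ).2 1 0 * γ 1 0 + (Tmap α β ξ χ γ).2 1 1 * γ 1 1 := by
  have hβ' : (β:ℝ) ≠ 0 := hβ.ne'
  have hα' : (α:ℝ) ≠ 0 := hα.ne'
  have hξ' : (ξ:ℝ) ≠ 0 := hξ.ne'
  have hQ0 : 0 ≤ Qform α β ξ χ γ := by unfold Qform; positivity
  set s := Real.sqrt (Qform α β ξ χ γ) with hsdef
  have hs0 : 0 ≤ s := Real.sqrt_nonneg _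
  have hs2 : s ^ 2 = Qform α β ξ χ γ := Real.sq_sqrt hQ0
  have hs1 : s < 1 := by
    rw [hsdef, show (1:ℝ) = Real.sqrt 1 by simp]
    exact Real.sqrt_lt_sqrt hQ0 hQ
  have h1s : (0:ℝ) < 1 - s := by linarith
  have h1s' : (1:ℝ) - s ≠ 0 := h1s.ne'
  have hQstar : Qstar α β ξ (Tmap α β ξ χ γ).1 (Tmap α β ξ χ γ).2 = (s / (1 - s)) ^ 2 := by
    simp only [Tmap, Qstar]
    rw [← hsdef, div_pow s]
    rw [show (Qform α β ξ χ γ) = β ^ 2 * (α ^ 2 * ((χ 0) ^ 2 + (χ 1) ^ 2) +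
      ξ ^ 2 * ((γ 0 0) ^ 2 + (γ 0 1) ^ 2 + (γ 1 0) ^ 2 + (γ 1 1) ^ 2)) from rfl] at hs2
    rw [hs2]
    field_simp
  have hsq : Real.sqrt (Qstar α β ξ (Tmap α β ξ χ γ).1 (Tmap α β ξ χ γ).2) = s / (1 - s) := by
    rw [hQstar, Real.sqrt_sq (div_nonneg hs0 h1s.le)]
  have hlog : Real.log (1 + s / (1 - s)) = -Real.log (1 - s) := by
    have : (1:ℝ) + s / (1 - s) = (1 - s)⁻¹ := by field_simp; ring
    rw [this, Real.log_inv]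
  unfold Wdens Wstar
  rw [hsq, hlog, ← hsdef]
  simp only [Tmap]
  have hA : Qform α β ξ χ γ = β ^ 2 * (α ^ 2 * ((χ 0) ^ 2 + (χ 1) ^ 2) +
      ξ ^ 2 * ((γ 0 0) ^ 2 + (γ 0 1) ^ 2 + (γ 1 0) ^ 2 + (γ 1 1) ^ 2)) := rfl
  rw [hA] at hs2
  rw [← hsdef]
  field_simp
  linear_combination hs2
end
end
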